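/- Let p and q be probability density functions supported on [−1,1] with p(x), q(x) ≥ 1/4 for all x ∈ [−1,1], and suppose that for some ε, ζ > 0 and k ∈ ℕ: |p(x) − q(x)| ≤ ε · 1(|x| ≤ ζ) for all x ∈ [−1,1], and ∫_{−ζ}^{ζ} x^ℓ (p(x) − q(x)) dx = 0 for all ℓ = 0, 1, …, k. Then for every σ ≤ 1/2 and every x ∈ ℝ, |log( (p * φ_{σ²})(x) / (q * φ_{σ²})(x) )| ≤ C ε (ζ/σ)^{k+2}, where C > 0 is an absolute constant. -/

import Mathlib

open MeasureTheory ProbabilityTheory Set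
open scoped NNReal ENNReal

noncomputable def gA (σ t : ℝ) : ℝ :=
  (Real.sqrt (2 * Real.pi * σ ^ 2))⁻¹ * Real.exp (-t ^ 2 / (2 * σ ^ 2))

lemma gA_eq (σ : ℝ) (t : ℝ) :
    gaussianPDFReal 0 (Real.toNNReal (σ ^ 2)) t = gA σ t := by
  simp [gaussianPDFReal, gA, Real.coe_toNNReal _ (sq_nonneg σ)]

lemma gA_nonneg (σ t : ℝ) : 0 ≤ gA σ t := by unfold gA; positivity

lemma gA_le (σ t : ℝ) : gA σ t ≤ (Real.sqrt (2 * Real.pi * σ ^ 2))⁻¹ := by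
  unfold gA
  have h1 : Real.exp (-t ^ 2 / (2 * σ ^ 2)) ≤ 1 := by
    apply Real.exp_le_one_iff.mpr
    apply div_nonpos_of_nonpos_of_nonneg
    · nlinarith [sq_nonneg t]
    · positivity
  nlinarith [inv_nonneg.mpr (Real.sqrt_nonneg (2 * Real.pi * σ ^ 2))]

lemma gA_cont (σ x : ℝ) : Continuous (fun y : ℝ => gA σ (x - y)) := by
  unfold gA; fun_prop


lemma exp_tsum (t : ℝ) : Real.exp t = ∑' n : ℕ, t ^ n / (n.factorial : ℝ) := by
  rw [Real.exp_eq_exp_ℝ, NormedSpace.exp_eq_tsum_div]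

lemma summable_norm_exp (t : ℝ) : Summable fun n : ℕ => ‖t ^ n / (n.factorial : ℝ)‖ := by
  apply (Real.summable_pow_div_factorial |t|).congr
  intro n
  rw [norm_div, norm_pow, Real.norm_eq_abs, Real.norm_natCast]

lemma summable_exp_series (t : ℝ) : Summable fun n : ℕ => t ^ n / (n.factorial : ℝ) :=
  (summable_norm_exp t).of_norm

lemma exp_half_le_two : Real.exp 2⁻¹ ≤ 2 := by
  nlinarith [Real.exp_one_lt_d9, Real.exp_pos (2⁻¹ : ℝ),
    (Real.exp_add 2⁻¹ 2⁻¹).symm.trans (by norm_num : Real.exp (2⁻¹ + 2⁻¹ : ℝ) = Real.exp 1)]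

lemma conv_integrable {f : ℝ → ℝ} (hfi : Integrable f) (σ x : ℝ) :
    Integrable (fun y => f y * gA σ (x - y)) := by
  have h : Integrable (fun y => gA σ (x - y) * f y) :=
    hfi.bdd_mul (c := (Real.sqrt (2 * Real.pi * σ ^ 2))⁻¹) (gA_cont σ x).aestronglyMeasurable
      (ae_of_all _ fun y => by
        rw [Real.norm_eq_abs, abs_of_nonneg (gA_nonneg _ _)]; exact gA_le _ _)
  simpa [mul_comm] using h

lemma sq_bound (σ x y : ℝ) (hσ0 : 0 < σ) (hσ : σ ≤ 1/2)
    (hy1 : max (-1) (min x (1 - σ/4)) ≤ y) (hy2 : y ≤ max (-1) (min x (1 - σ/4)) + σ/4) :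
    (x - y)^2 ≤ (|x| - σ)^2 + σ^2 := by
  rcases le_total x (-1) with hx | hx
  · have h1 : min x (1 - σ/4) = x := min_eq_left (by linarith)
    have h2 : max (-1:ℝ) x = -1 := max_eq_left (by linarith)
    rw [h1, h2] at hy1 hy2
    have hax : |x| = -x := abs_of_nonpos (by linarith)
    rw [hax]
    nlinarith
  · rcases le_total x (1 - σ/4) with hx2 | hx2
    · have h1 : min x (1 - σ/4) = x := min_eq_left hx2
      have h2 : max (-1:ℝ) x = x := max_eq_right hx
      rw [h1, h2] at hy1 hy2
      nlinarith [sq_nonneg (|x| - σ)]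
    · have h1 : min x (1 - σ/4) = 1 - σ/4 := min_eq_right hx2
      have h2 : max (-1:ℝ) (1 - σ/4) = 1 - σ/4 := max_eq_right (by linarith)
      rw [h1, h2] at hy1 hy2
      have hax : |x| = x := abs_of_nonneg (by linarith)
      rw [hax]
      nlinarith [sq_nonneg (x - 1)]

lemma conv_lower (σ x : ℝ) (hσ0 : 0 < σ) (hσ : σ ≤ 1/2) (f : ℝ → ℝ)
    (hf0 : ∀ y, 0 ≤ f y) (hf14 : ∀ y ∈ Icc (-1:ℝ) 1, 1/4 ≤ f y)
    (hfi : Integrable f) :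
    σ/16 * ((Real.sqrt (2*Real.pi*σ^2))⁻¹ *
        Real.exp (-((|x|-σ)^2 + σ^2) / (2*σ^2)))
      ≤ ∫ y, f y * gA σ (x - y) := by
  set y₀ := max (-1:ℝ) (min x (1 - σ/4)) with hy₀
  set c := (Real.sqrt (2*Real.pi*σ^2))⁻¹ * Real.exp (-((|x|-σ)^2+σ^2)/(2*σ^2)) with hc
  have hcnn : 0 ≤ c := by rw [hc]; positivity
  have hJsub : Icc y₀ (y₀ + σ/4) ⊆ Icc (-1:ℝ) 1 := by
    intro y hy
    have h1 : (-1:ℝ) ≤ y₀ := le_max_left _ _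
    have h2 : y₀ ≤ 1 - σ/4 := max_le (by linarith) (min_le_right _ _)
    exact ⟨by linarith [hy.1], by linarith [hy.2]⟩
  have hint : Integrable (fun y => f y * gA σ (x - y)) := conv_integrable hfi σ x
  have hptwise : ∀ y ∈ Icc y₀ (y₀ + σ/4), 1/4 * c ≤ f y * gA σ (x - y) := by
    intro y hy
    have hsq := sq_bound σ x y hσ0 hσ hy.1 hy.2
    have hgA : c ≤ gA σ (x - y) := by
      rw [hc]; unfold gA
      have hd : -((|x|-σ)^2+σ^2)/(2*σ^2) ≤ -(x-y)^2/(2*σ^2) := by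
        rw [div_le_div_iff_of_pos_right (by positivity : (0:ℝ) < 2*σ^2)]
        linarith
      exact mul_le_mul_of_nonneg_left (Real.exp_le_exp.mpr hd)
        (inv_nonneg.mpr (Real.sqrt_nonneg _))
    exact mul_le_mul (hf14 y (hJsub hy)) hgA hcnn (hf0 y)
  have h2 : (1/4 * c) * (volume (Icc y₀ (y₀ + σ/4))).toReal
      ≤ ∫ y in Icc y₀ (y₀ + σ/4), f y * gA σ (x - y) :=
    setIntegral_ge_of_const_le_real measurableSet_Icc measure_Icc_lt_top.ne hptwise
      hint.integrableOn
  have h1 : ∫ y in Icc y₀ (y₀ + σ/4), f y * gA σ (x - y) ≤ ∫ y, f y * gA σ (x - y) :=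
    setIntegral_le_integral hint (ae_of_all _ fun y => mul_nonneg (hf0 y) (gA_nonneg _ _))
  have hvol : (volume (Icc y₀ (y₀ + σ/4))).toReal = σ/4 := by
    rw [Real.volume_Icc]
    simp
    linarith
  rw [hvol] at h2
  calc σ/16 * c = (1/4 * c) * (σ/4) := by ring
    _ ≤ _ := le_trans h2 h1
lemma hard_bound (σ x ε ζ : ℝ) (k : ℕ) (hσ0 : 0 < σ) (hζ0 : 0 < ζ) (hζσ : ζ < σ)
    (hε : 0 < ε) (d : ℝ → ℝ) (hdm : Measurable d) (hdi : Integrable d)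
    (hd0 : ∀ y, y ∉ Icc (-ζ) ζ → d y = 0)
    (hdb : ∀ y, |d y| ≤ ε)
    (hmom : ∀ n : ℕ, n ≤ k → (∫ y in Icc (-ζ) ζ, y ^ n * d y) = 0) :
    |∫ y, d y * gA σ (x - y)|
      ≤ 4 * ε * ζ * (ζ/σ)^(k+1) * Real.exp (|x|/σ) * gA σ x := by
  have hσ2 : (0:ℝ) < σ^2 := by positivity
  set S : Set ℝ := Icc (-ζ) ζ with hS
  set a : ℝ := x / σ^2 with ha
  set b : ℝ := (2*σ^2)⁻¹ with hb
  have hbpos : 0 < b := by rw [hb]; positivity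
  set u : ℝ := |x| / σ with hu
  have hu0 : 0 ≤ u := by rw [hu]; positivity
  set r : ℝ := ζ / σ with hr
  have hr0 : 0 ≤ r := by rw [hr]; positivity
  have hr1 : r ≤ 1 := by rw [hr]; exact (div_le_one hσ0).mpr hζσ.le
  have haa : |a| = |x| / σ^2 := by
    rw [ha, abs_div, abs_of_pos hσ2]
  -- series for the exponential factor
  set F : ℕ × ℕ → ℝ → ℝ := fun pr y =>
    ((a*y)^pr.1 / (pr.1.factorial : ℝ)) * ((-(b*y^2))^pr.2 / (pr.2.factorial : ℝ)) with hF
  have hFexp : ∀ y : ℝ, Real.exp (a*y - b*y^2) = ∑' pr : ℕ × ℕ, F pr y := by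
    intro y
    rw [sub_eq_add_neg, Real.exp_add, exp_tsum (a*y), exp_tsum (-(b*y^2))]
    exact tsum_mul_tsum_of_summable_norm (summable_norm_exp _) (summable_norm_exp _)
  -- gaussian factorization
  have hgfac : ∀ y : ℝ, gA σ (x - y) = gA σ x * Real.exp (a*y - b*y^2) := by
    intro y
    unfold gA
    rw [mul_assoc _ (Real.exp _) (Real.exp _), ← Real.exp_add]
    congr 1
    rw [ha, hb]
    field_simp
    ring
  -- restrict the integral to S
  have step1 : (∫ y, d y * gA σ (x - y)) = ∫ y in S, d y * gA σ (x - y) :=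
    (setIntegral_eq_integral_of_forall_compl_eq_zero fun y hy => by
      rw [hd0 y hy, zero_mul]).symm
  have step2 : (∫ y in S, d y * gA σ (x - y))
      = gA σ x * ∫ y in S, d y * Real.exp (a*y - b*y^2) := by
    rw [← integral_const_mul]
    apply integral_congr_ae
    filter_upwards with y
    rw [hgfac y]; ring
  -- dominating weights
  set w : ℕ × ℕ → ℝ := fun pr =>
    ((|a| * ζ)^pr.1 / (pr.1.factorial : ℝ)) * ((b*ζ^2)^pr.2 / (pr.2.factorial : ℝ)) with hw
  have hw0 : ∀ pr : ℕ × ℕ, 0 ≤ w pr := by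
    intro pr
    apply mul_nonneg <;> apply div_nonneg <;> positivity
  have hwsum : Summable w := by
    apply Summable.mul_of_nonneg (Real.summable_pow_div_factorial (|a| * ζ))
      (Real.summable_pow_div_factorial (b*ζ^2)) <;>
      intro n <;> apply div_nonneg <;> positivity
  have hFw : ∀ pr : ℕ × ℕ, ∀ y ∈ S, |F pr y| ≤ w pr := by
    intro pr y hy
    have hyζ : |y| ≤ ζ := abs_le.mpr ⟨hy.1, hy.2⟩
    have h1b : |a*y| ≤ |a| * ζ := by
      rw [abs_mul]
      exact mul_le_mul_of_nonneg_left hyζ (abs_nonneg a)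
    have h2b : |(-(b*y^2))| ≤ b * ζ^2 := by
      rw [abs_neg, abs_mul, abs_of_pos hbpos, abs_pow, sq_abs]
      have hy2 : y^2 ≤ ζ^2 := sq_le_sq' (abs_le.mp hyζ).1 (abs_le.mp hyζ).2
      exact mul_le_mul_of_nonneg_left hy2 hbpos.le
    have h1 : |(a*y)^pr.1| / (pr.1.factorial : ℝ) ≤ (|a| * ζ)^pr.1 / (pr.1.factorial : ℝ) := by
      gcongr
      rw [abs_pow]
      exact pow_le_pow_left₀ (abs_nonneg _) h1b _
    have h2 : |(-(b*y^2))^pr.2| / (pr.2.factorial : ℝ) ≤ (b*ζ^2)^pr.2 / (pr.2.factorial : ℝ) := by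
      gcongr
      rw [abs_pow]
      exact pow_le_pow_left₀ (abs_nonneg _) h2b _
    have e1 : |F pr y| = |(a*y)^pr.1| / (pr.1.factorial : ℝ)
        * (|(-(b*y^2))^pr.2| / (pr.2.factorial : ℝ)) := by
      rw [hF]
      simp [abs_mul, abs_div]
    rw [e1, hw]
    exact mul_le_mul h1 h2 (by positivity) (by positivity)
  have hFm : ∀ pr : ℕ × ℕ, AEStronglyMeasurable (fun y => d y * F pr y) (volume.restrict S) := by
    intro pr
    apply Measurable.aestronglyMeasurable
    apply hdm.mul
    rw [hF]
    fun_prop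
  have hFint : ∀ pr : ℕ × ℕ, Integrable (fun y => d y * F pr y) (volume.restrict S) := by
    intro pr
    apply Integrable.mono' (integrable_const (ε * w pr)) (hFm pr)
    filter_upwards [ae_restrict_mem measurableSet_Icc] with y hy
    rw [Real.norm_eq_abs, abs_mul]
    exact mul_le_mul (hdb y) (hFw pr y hy) (abs_nonneg _) hε.le
  have hSvol : (volume S).toReal = 2 * ζ := by
    rw [hS, Real.volume_Icc, ENNReal.toReal_ofReal (by linarith)]
    ring
  have hIntNorm : ∀ pr : ℕ × ℕ, (∫ y in S, ‖d y * F pr y‖) ≤ ε * w pr * (2 * ζ) := by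
    intro pr
    calc (∫ y in S, ‖d y * F pr y‖) ≤ ∫ _ in S, ε * w pr := by
          apply setIntegral_mono_on (hFint pr).norm
            (integrableOn_const (by rw [hS]; exact measure_Icc_lt_top.ne))
            measurableSet_Icc
          intro y hy
          rw [Real.norm_eq_abs, abs_mul]
          exact mul_le_mul (hdb y) (hFw pr y hy) (abs_nonneg _) hε.le
      _ = ε * w pr * (2 * ζ) := by
          rw [setIntegral_const, smul_eq_mul]
          change (volume S).toReal * _ = _
          rw [hSvol]
          ring
  have hIntNormSum : Summable (fun pr : ℕ × ℕ => ∫ y in S, ‖d y * F pr y‖) := by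
    apply Summable.of_nonneg_of_le (fun pr => integral_nonneg fun y => norm_nonneg _) hIntNorm
    exact (hwsum.mul_left ε).mul_right (2*ζ)
  set T : ℕ × ℕ → ℝ := fun pr => ∫ y in S, d y * F pr y with hT
  have step3 : (∫ y in S, d y * Real.exp (a*y - b*y^2)) = ∑' pr : ℕ × ℕ, T pr := by
    have h1 : (∫ y in S, d y * Real.exp (a*y - b*y^2))
        = ∫ y in S, ∑' pr : ℕ × ℕ, d y * F pr y := by
      apply integral_congr_ae
      filter_upwards with y
      rw [hFexp y, tsum_mul_left]
    rw [h1]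
    exact (integral_tsum_of_summable_integral_norm hFint hIntNormSum).symm
  have hTeq : ∀ pr : ℕ × ℕ, T pr = (a^pr.1 / (pr.1.factorial : ℝ))
      * ((-b)^pr.2 / (pr.2.factorial : ℝ)) * ∫ y in S, y^(pr.1 + 2*pr.2) * d y := by
    intro pr
    show (∫ y in S, d y * F pr y) = _
    rw [← integral_const_mul]
    apply integral_congr_ae
    filter_upwards with y
    rw [hF]
    ring
  have hMom : ∀ n : ℕ, |∫ y in S, y^n * d y| ≤ 2 * ε * ζ^(n+1) := by
    intro n
    have hb1 : ∀ y ∈ S, ‖y^n * d y‖ ≤ ζ^n * ε := by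
      intro y hy
      have hyζ : |y| ≤ ζ := abs_le.mpr ⟨hy.1, hy.2⟩
      rw [Real.norm_eq_abs, abs_mul, abs_pow]
      exact mul_le_mul (pow_le_pow_left₀ (abs_nonneg y) hyζ n) (hdb y) (abs_nonneg _)
        (by positivity)
    have := norm_setIntegral_le_of_norm_le_const (μ := volume) (s := S)
      (f := fun y => y^n * d y) (by exact measure_Icc_lt_top) hb1
    rw [Real.norm_eq_abs] at this
    change _ ≤ _ * (volume S).toReal at this
    rw [hSvol] at this
    calc |∫ y in S, y^n * d y| ≤ ζ^n * ε * (2*ζ) := this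
      _ = 2 * ε * ζ^(n+1) := by ring
  -- the bounding sequence
  set G : ℕ × ℕ → ℝ := fun pr => 2*ε*ζ * ((u^pr.1 / (pr.1.factorial : ℝ))
      * ((2:ℝ)⁻¹^pr.2 / (pr.2.factorial : ℝ))) * r^(k+1) with hG
  have hG0 : ∀ pr : ℕ × ℕ, 0 ≤ G pr := by
    intro pr
    simp only [hG]
    positivity
  have hg1 : |a| * ζ = u * r := by
    rw [haa, hu, hr, div_mul_div_comm, div_mul_eq_mul_div, sq]
  have hg2 : b * ζ^2 = 2⁻¹ * r^2 := by
    rw [hb, hr, div_pow, mul_inv]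
    ring
  have hTG : ∀ pr : ℕ × ℕ, |T pr| ≤ G pr := by
    intro pr
    rcases le_or_gt (pr.1 + 2*pr.2) k with hik | hik
    · rw [hTeq pr, hmom _ hik, mul_zero, abs_zero]
      exact hG0 pr
    · rw [hTeq pr, abs_mul]
      have e1 : |a^pr.1 / (pr.1.factorial : ℝ) * ((-b)^pr.2 / (pr.2.factorial : ℝ))|
          = (|a|^pr.1 / (pr.1.factorial : ℝ)) * (b^pr.2 / (pr.2.factorial : ℝ)) := by
        rw [abs_mul, abs_div, abs_div, abs_pow, abs_pow, abs_neg, abs_of_pos hbpos,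
          Nat.abs_cast, Nat.abs_cast]
      rw [e1]
      have hζsplit : ζ^(pr.1 + 2*pr.2 + 1) = ζ^pr.1 * (ζ^2)^pr.2 * ζ := by
        rw [pow_succ, pow_add, pow_mul]
      have hrsplit : r^(pr.1 + 2*pr.2) = r^pr.1 * (r^2)^pr.2 := by
        rw [pow_add, pow_mul]
      calc (|a|^pr.1 / (pr.1.factorial : ℝ)) * (b^pr.2 / (pr.2.factorial : ℝ))
            * |∫ y in S, y^(pr.1 + 2*pr.2) * d y|
          ≤ (|a|^pr.1 / (pr.1.factorial : ℝ)) * (b^pr.2 / (pr.2.factorial : ℝ))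
            * (2 * ε * ζ^(pr.1 + 2*pr.2 + 1)) :=
            mul_le_mul_of_nonneg_left (hMom _) (by positivity)
        _ = 2*ε*ζ * (((|a| * ζ)^pr.1 / (pr.1.factorial : ℝ))
            * ((b*ζ^2)^pr.2 / (pr.2.factorial : ℝ))) := by
            rw [hζsplit, mul_pow, mul_pow]
            ring
        _ = 2*ε*ζ * ((u^pr.1 / (pr.1.factorial : ℝ))
            * ((2:ℝ)⁻¹^pr.2 / (pr.2.factorial : ℝ))) * r^(pr.1 + 2*pr.2) := by
            rw [hg1, hg2, hrsplit, mul_pow, mul_pow]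
            ring
        _ ≤ G pr := by
            have hrr : r^(pr.1 + 2*pr.2) ≤ r^(k+1) := pow_le_pow_of_le_one hr0 hr1 hik
            exact mul_le_mul_of_nonneg_left hrr (by positivity)
  have hfG : ∀ pr : ℕ × ℕ, G pr = (2*ε*ζ*r^(k+1)) * ((u^pr.1 / (pr.1.factorial : ℝ))
      * ((2:ℝ)⁻¹^pr.2 / (pr.2.factorial : ℝ))) := by
    intro pr
    simp only [hG]
    ring
  have hsum_ub : Summable (fun pr : ℕ × ℕ => (u^pr.1 / (pr.1.factorial : ℝ))
      * ((2:ℝ)⁻¹^pr.2 / (pr.2.factorial : ℝ))) := by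
    apply Summable.mul_of_nonneg (Real.summable_pow_div_factorial u)
      (Real.summable_pow_div_factorial 2⁻¹) <;>
      intro n <;> apply div_nonneg <;> positivity
  have hGsum : Summable G := (hsum_ub.mul_left (2*ε*ζ*r^(k+1))).congr fun pr => (hfG pr).symm
  have hGtsum : ∑' pr : ℕ × ℕ, G pr = (2*ε*ζ*r^(k+1)) * (Real.exp u * Real.exp 2⁻¹) := by
    rw [tsum_congr hfG, tsum_mul_left, exp_tsum u, exp_tsum (2⁻¹:ℝ),
      tsum_mul_tsum_of_summable_norm (summable_norm_exp _) (summable_norm_exp _)]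
  have hTabs : Summable fun pr : ℕ × ℕ => |T pr| :=
    Summable.of_nonneg_of_le (fun pr => abs_nonneg _) hTG hGsum
  have hfinal : |∑' pr : ℕ × ℕ, T pr| ≤ 4*ε*ζ*r^(k+1)*Real.exp u := by
    calc |∑' pr : ℕ × ℕ, T pr| ≤ ∑' pr : ℕ × ℕ, |T pr| := by
          simpa [Real.norm_eq_abs] using
            norm_tsum_le_tsum_norm (f := T) (by simpa [Real.norm_eq_abs] using hTabs)
      _ ≤ ∑' pr : ℕ × ℕ, G pr := hTabs.tsum_le_tsum hTG hGsum
      _ = (2*ε*ζ*r^(k+1)) * (Real.exp u * Real.exp 2⁻¹) := hGtsum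
      _ ≤ (2*ε*ζ*r^(k+1)) * (Real.exp u * 2) := by
          have h2 : Real.exp u * Real.exp 2⁻¹ ≤ Real.exp u * 2 :=
            mul_le_mul_of_nonneg_left exp_half_le_two (Real.exp_pos u).le
          exact mul_le_mul_of_nonneg_left h2 (by positivity)
      _ = 4*ε*ζ*r^(k+1)*Real.exp u := by ring
  rw [step1, step2, step3, abs_mul, abs_of_nonneg (gA_nonneg σ x)]
  exact (mul_le_mul_of_nonneg_left hfinal (gA_nonneg σ x)).trans_eq (by ring)
lemma log_ratio (P Q θ : ℝ) (hP : 0 < P) (hQ : 0 < Q) (hθ : 0 ≤ θ)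
    (h1 : |P - Q| ≤ θ * Q) (h2 : |P - Q| ≤ θ * P) : |Real.log (P / Q)| ≤ θ := by
  have hup : Real.log (P / Q) ≤ θ := by
    have hPQ : P / Q ≤ 1 + θ := by
      rw [div_le_iff₀ hQ]
      have := (abs_le.mp h1).2
      nlinarith
    calc Real.log (P/Q) ≤ P/Q - 1 := Real.log_le_sub_one_of_pos (div_pos hP hQ)
      _ ≤ θ := by linarith
  have hlow : -θ ≤ Real.log (P / Q) := by
    have hQP : Q / P ≤ 1 + θ := by
      rw [div_le_iff₀ hP]
      have := (abs_le.mp h2).1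
      nlinarith
    have h := Real.log_le_sub_one_of_pos (div_pos hQ hP)
    rw [Real.log_div hQ.ne' hP.ne'] at h
    rw [Real.log_div hP.ne' hQ.ne']
    have : Real.log Q - Real.log P ≤ θ := by linarith
    linarith
  exact abs_le.mpr ⟨hlow, hup⟩

lemma easy_bound (σ x ε : ℝ) (d f : ℝ → ℝ) (hdi : Integrable d) (hfi : Integrable f)
    (hd4f : ∀ y, |d y| ≤ 4 * ε * f y) :
    |∫ y, d y * gA σ (x - y)| ≤ 4 * ε * ∫ y, f y * gA σ (x - y) := by
  have h1 : |∫ y, d y * gA σ (x-y)| ≤ ∫ y, |d y * gA σ (x-y)| := by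
    have := norm_integral_le_integral_norm (μ := volume) (fun y => d y * gA σ (x-y))
    simpa only [Real.norm_eq_abs] using this
  have h2 : (∫ y, |d y * gA σ (x-y)|) ≤ ∫ y, 4 * ε * (f y * gA σ (x-y)) := by
    apply integral_mono_of_nonneg (ae_of_all _ fun y => abs_nonneg _)
      ((conv_integrable hfi σ x).const_mul (4*ε))
    filter_upwards with y
    rw [abs_mul, abs_of_nonneg (gA_nonneg _ _)]
    calc |d y| * gA σ (x-y) ≤ (4*ε*f y) * gA σ (x-y) :=
          mul_le_mul_of_nonneg_right (hd4f y) (gA_nonneg _ _)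
      _ = 4*ε*(f y * gA σ (x-y)) := by ring

  calc |∫ y, d y * gA σ (x-y)| ≤ ∫ y, |d y * gA σ (x-y)| := h1
    _ ≤ ∫ y, 4 * ε * (f y * gA σ (x-y)) := h2
    _ = 4 * ε * ∫ y, f y * gA σ (x-y) := integral_const_mul _ _

/-- There is an absolute constant `C > 0` such that: for all probability
densities `p, q` supported on `[−1,1]` with `p, q ≥ 1/4` on `[−1,1]`, if
`|p − q| ≤ ε·1(|x| ≤ ζ)` on `[−1,1]` and `∫_{−ζ}^{ζ} x^ℓ (p(x) − q(x)) dx = 0` for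
`ℓ = 0,…,k`, then for every `0 < σ ≤ 1/2` and every `x ∈ ℝ`,
`|log((p*φ_{σ²})(x) / (q*φ_{σ²})(x))| ≤ C ε (ζ/σ)^{k+2}`. -/
theorem stmt18 :
    ∃ C : ℝ, 0 < C ∧
      ∀ (p q : ℝ → ℝ), Measurable p → Measurable q →
      (∀ x, 0 ≤ p x) → (∀ x, 0 ≤ q x) →
      (∀ x, x ∉ Set.Icc (-1 : ℝ) 1 → p x = 0) →
      (∀ x, x ∉ Set.Icc (-1 : ℝ) 1 → q x = 0) →
      (∫ x, p x = 1) → (∫ x, q x = 1) →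
      (∀ x ∈ Set.Icc (-1 : ℝ) 1, 1 / 4 ≤ p x) →
      (∀ x ∈ Set.Icc (-1 : ℝ) 1, 1 / 4 ≤ q x) →
      ∀ (ε ζ : ℝ) (k : ℕ), 0 < ε → 0 < ζ →
      (∀ x ∈ Set.Icc (-1 : ℝ) 1,
        |p x - q x| ≤ ε * Set.indicator {y : ℝ | |y| ≤ ζ} (fun _ => (1 : ℝ)) x) →
      (∀ ℓ : ℕ, ℓ ≤ k → ∫ x in Set.Icc (-ζ) ζ, x ^ ℓ * (p x - q x) = 0) →
      ∀ σ : ℝ, 0 < σ → σ ≤ 1 / 2 →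
      ∀ x : ℝ,
        |Real.log ((∫ y, p y * gaussianPDFReal 0 (Real.toNNReal (σ ^ 2)) (x - y)) /
            (∫ y, q y * gaussianPDFReal 0 (Real.toNNReal (σ ^ 2)) (x - y)))|
          ≤ C * ε * (ζ / σ) ^ (k + 2) := by
  refine ⟨256, by norm_num, ?_⟩
  intro p q hpm hqm hp0 hq0 hpsupp hqsupp hpint hqint hp14 hq14 ε ζ k hε hζ hind hmom
    σ hσ0 hσ x
  have hgeq : ∀ y : ℝ, gaussianPDFReal 0 (Real.toNNReal (σ^2)) (x - y) = gA σ (x - y) :=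
    fun y => gA_eq σ (x - y)
  simp only [hgeq]
  -- integrability of p and q
  have hpi : Integrable p := by
    by_contra h
    rw [integral_undef h] at hpint
    norm_num at hpint
  have hqi : Integrable q := by
    by_contra h
    rw [integral_undef h] at hqint
    norm_num at hqint
  set d : ℝ → ℝ := fun y => p y - q y with hd
  have hdm : Measurable d := hpm.sub hqm
  have hdi : Integrable d := hpi.sub hqi
  set P := ∫ y, p y * gA σ (x - y) with hP
  set Q := ∫ y, q y * gA σ (x - y) with hQ
  have hdint : (∫ y, d y * gA σ (x-y)) = P - Q := by
    rw [hP, hQ, ← integral_sub (conv_integrable hpi σ x) (conv_integrable hqi σ x)]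
    apply integral_congr_ae
    filter_upwards with y
    simp only [hd]
    ring
  set L := σ/16 * ((Real.sqrt (2*Real.pi*σ^2))⁻¹ *
      Real.exp (-((|x|-σ)^2 + σ^2)/(2*σ^2))) with hL
  have hLpos : 0 < L := by rw [hL]; positivity
  have hlowP : L ≤ P := conv_lower σ x hσ0 hσ p hp0 hp14 hpi
  have hlowQ : L ≤ Q := conv_lower σ x hσ0 hσ q hq0 hq14 hqi
  have hPpos : 0 < P := lt_of_lt_of_le hLpos hlowP
  have hQpos : 0 < Q := lt_of_lt_of_le hLpos hlowQ
  have hind1 : ∀ y : ℝ, Set.indicator {y : ℝ | |y| ≤ ζ} (fun _ => (1:ℝ)) y ≤ 1 := by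
    intro y
    simp only [Set.indicator]
    split <;> norm_num
  have hind0 : ∀ y : ℝ, 0 ≤ Set.indicator {y : ℝ | |y| ≤ ζ} (fun _ => (1:ℝ)) y := by
    intro y
    simp only [Set.indicator]
    split <;> norm_num
  have hdb : ∀ y, |d y| ≤ ε := by
    intro y
    by_cases hy : y ∈ Icc (-1:ℝ) 1
    · refine (hind y hy).trans ?_
      have := hind1 y
      nlinarith
    · simp only [hd]
      rw [hpsupp y hy, hqsupp y hy]
      simp [hε.le]
  have hd4 : ∀ (f : ℝ → ℝ), (∀ y, 0 ≤ f y) → (∀ y ∈ Icc (-1:ℝ) 1, 1/4 ≤ f y) →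
      ∀ y, |d y| ≤ 4 * ε * f y := by
    intro f hf0 hf14 y
    by_cases hy : y ∈ Icc (-1:ℝ) 1
    · refine (hind y hy).trans ?_
      have h1 := hind1 y
      have h2 := hf14 y hy
      nlinarith
    · simp only [hd]
      rw [hpsupp y hy, hqsupp y hy, sub_self, abs_zero]
      exact mul_nonneg (mul_nonneg (by norm_num) hε.le) (hf0 y)
  set θ := 256 * ε * (ζ / σ) ^ (k + 2) with hθdef
  have hrpow : (0:ℝ) ≤ (ζ/σ)^(k+2) := by positivity
  have hθ0 : 0 ≤ θ := by
    rw [hθdef]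
    nlinarith [hε.le]
  have key : ∀ (f : ℝ → ℝ), (∀ y, 0 ≤ f y) → (∀ y ∈ Icc (-1:ℝ) 1, 1/4 ≤ f y) →
      Integrable f → L ≤ (∫ y, f y * gA σ (x - y)) →
      |P - Q| ≤ θ * ∫ y, f y * gA σ (x - y) := by
    intro f hf0 hf14 hfi hlow
    have hconv_pos : 0 < ∫ y, f y * gA σ (x - y) := lt_of_lt_of_le hLpos hlow
    rw [← hdint]
    rcases lt_or_ge ζ σ with hζσ | hσζ
    · -- hard case : ζ < σ
      have hd0 : ∀ y, y ∉ Icc (-ζ) ζ → d y = 0 := by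
        intro y hy
        by_cases hy1 : y ∈ Icc (-1:ℝ) 1
        · have hindy : Set.indicator {y : ℝ | |y| ≤ ζ} (fun _ => (1:ℝ)) y = 0 := by
            apply Set.indicator_of_notMem
            intro hmem
            exact hy (mem_Icc.mpr (abs_le.mp hmem))
          have h1 := hind y hy1
          rw [hindy, mul_zero] at h1
          have : |d y| ≤ 0 := h1
          simpa using abs_eq_zero.mp (le_antisymm this (abs_nonneg _))
        · simp only [hd]
          rw [hpsupp y hy1, hqsupp y hy1]
          ring
      have hmom' : ∀ n : ℕ, n ≤ k → (∫ y in Icc (-ζ) ζ, y ^ n * d y) = 0 :=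
        fun n hn => hmom n hn
      have hh := hard_bound σ x ε ζ k hσ0 hζ hζσ hε d hdm hdi hd0 hdb hmom'
      have hζr : ζ * (ζ/σ)^(k+1) = σ * (ζ/σ)^(k+2) := by
        have hc : σ * (ζ/σ) = ζ := by field_simp
        calc ζ * (ζ/σ)^(k+1) = (σ*(ζ/σ)) * (ζ/σ)^(k+1) := by rw [hc]
          _ = σ * (ζ/σ)^(k+2) := by rw [pow_succ]; ring
      have hexp : Real.exp (|x|/σ) * Real.exp (-x^2/(2*σ^2))
          = Real.exp 1 * Real.exp (-((|x|-σ)^2+σ^2)/(2*σ^2)) := by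
        rw [← Real.exp_add, ← Real.exp_add]
        congr 1
        field_simp
        linear_combination sq_abs x
      have he4 : Real.exp 1 ≤ 4 := by nlinarith [Real.exp_one_lt_d9]
      calc |∫ y, d y * gA σ (x-y)|
          ≤ 4*ε*ζ*(ζ/σ)^(k+1) * Real.exp (|x|/σ) * gA σ x := hh
        _ = 4*ε*σ*(ζ/σ)^(k+2) * ((Real.exp (|x|/σ) * Real.exp (-x^2/(2*σ^2)))
            * (Real.sqrt (2*Real.pi*σ^2))⁻¹) := by
            unfold gA
            rw [show 4*ε*ζ*(ζ/σ)^(k+1) = 4*ε*(ζ*(ζ/σ)^(k+1)) by ring, hζr]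
            ring
        _ = 4*ε*σ*(ζ/σ)^(k+2) * ((Real.exp 1 * Real.exp (-((|x|-σ)^2+σ^2)/(2*σ^2)))
            * (Real.sqrt (2*Real.pi*σ^2))⁻¹) := by rw [hexp]
        _ ≤ 4*ε*σ*(ζ/σ)^(k+2) * ((4 * Real.exp (-((|x|-σ)^2+σ^2)/(2*σ^2)))
            * (Real.sqrt (2*Real.pi*σ^2))⁻¹) := by gcongr
        _ = 256*ε*(ζ/σ)^(k+2) * L := by rw [hL]; ring
        _ ≤ 256*ε*(ζ/σ)^(k+2) * ∫ y, f y * gA σ (x-y) :=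
            mul_le_mul_of_nonneg_left hlow (by nlinarith [hε.le])
        _ = θ * ∫ y, f y * gA σ (x-y) := by rw [hθdef]
    · -- easy case : σ ≤ ζ
      have he := easy_bound σ x ε d f hdi hfi (hd4 f hf0 hf14)
      have hr1 : (1:ℝ) ≤ ζ/σ := (one_le_div hσ0).mpr hσζ
      have hrk : (1:ℝ) ≤ (ζ/σ)^(k+2) := by
        calc (1:ℝ) = 1^(k+2) := (one_pow _).symm
          _ ≤ (ζ/σ)^(k+2) := pow_le_pow_left₀ zero_le_one hr1 _
      calc |∫ y, d y * gA σ (x-y)| ≤ 4*ε*∫ y, f y * gA σ (x-y) := he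
        _ ≤ θ * ∫ y, f y * gA σ (x-y) := by
            refine mul_le_mul_of_nonneg_right ?_ hconv_pos.le
            rw [hθdef]
            have h3 : ε * 1 ≤ ε * (ζ/σ)^(k+2) := mul_le_mul_of_nonneg_left hrk hε.le
            linarith
  have hkQ := key q hq0 hq14 hqi hlowQ
  have hkP := key p hp0 hp14 hpi hlowP
  exact log_ratio P Q θ hPpos hQpos hθ0 hkQ hkP
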